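/- There is an isomorphism of ℝ-algebras between W_{D(2)} = ℝ[U,V]/(U², UV, V²) and the reduced tensor product W_D ⊗̃ W_D, i.e. the equalizer subalgebra {z ∈ W_D ⊗ W_D : p₁(z) = p₀(z)}. -/

import Mathlib

open TensorProduct Polynomial

noncomputable section

/-- The first projection `p₁ : A ⊗ B →ₐ[ℝ] B`, `a ⊗ b ↦ ε_A a • b`. -/
def p1 {A B : Type} [CommRing A] [CommRing B] [Algebra ℝ A] [Algebra ℝ B]
    (εA : A →ₐ[ℝ] ℝ) : (A ⊗[ℝ] B) →ₐ[ℝ] B :=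
  Algebra.TensorProduct.productMap ((Algebra.ofId ℝ B).comp εA) (AlgHom.id ℝ B)

/-- The second projection `p₀ : A ⊗ B →ₐ[ℝ] B`, `a ⊗ b ↦ (ε_A a * ε_B b) • 1`. -/
def p0 {A B : Type} [CommRing A] [CommRing B] [Algebra ℝ A] [Algebra ℝ B]
    (εA : A →ₐ[ℝ] ℝ) (εB : B →ₐ[ℝ] ℝ) : (A ⊗[ℝ] B) →ₐ[ℝ] B :=
  Algebra.TensorProduct.productMap ((Algebra.ofId ℝ B).comp εA) ((Algebra.ofId ℝ B).comp εB)

/-- The reduced tensor product `A ⊗̃ B`: the equalizer subalgebra of `p₁` and `p₀`. -/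
def redT {A B : Type} [CommRing A] [CommRing B] [Algebra ℝ A] [Algebra ℝ B]
    (εA : A →ₐ[ℝ] ℝ) (εB : B →ₐ[ℝ] ℝ) : Subalgebra ℝ (A ⊗[ℝ] B) :=
  AlgHom.equalizer (p1 εA) (p0 εA εB)

/-- The Weil algebra `W_D = ℝ[X]/(X²)`. -/
def WD : Type := Polynomial ℝ ⧸ Ideal.span {(X : Polynomial ℝ) ^ 2}

instance : CommRing WD := Ideal.Quotient.commRing _
instance : Algebra ℝ WD := Ideal.Quotient.algebra _

/-- The class of `X` in `W_D`. -/
def xD : WD := Ideal.Quotient.mk _ (X : Polynomial ℝ)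

/-- The augmentation `ε : W_D →ₐ[ℝ] ℝ`, `a + b·x ↦ a`. -/
def εD : WD →ₐ[ℝ] ℝ :=
  Ideal.Quotient.liftₐ _ (aeval (0 : ℝ)) (by
    intro a ha
    rw [Ideal.mem_span_singleton] at ha
    obtain ⟨c, rfl⟩ := ha
    simp)

/-- The ideal `(U², UV, V²)` in `ℝ[U,V]`. -/
def ID2 : Ideal (MvPolynomial (Fin 2) ℝ) :=
  Ideal.span {MvPolynomial.X 0 * MvPolynomial.X 0, MvPolynomial.X 0 * MvPolynomial.X 1,
    MvPolynomial.X 1 * MvPolynomial.X 1}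

/-- The Weil algebra `W_{D(2)} = ℝ[U,V]/(U², UV, V²)`. -/
def WD2 : Type := MvPolynomial (Fin 2) ℝ ⧸ ID2

instance : CommRing WD2 := Ideal.Quotient.commRing _
instance : Algebra ℝ WD2 := Ideal.Quotient.algebra _

-- ### basis of WD
lemma monicX2 : ((X : Polynomial ℝ) ^ 2).Monic := monic_X_pow 2

def bD : Module.Basis (Fin 2) ℝ WD :=
  (AdjoinRoot.powerBasisAux' monicX2).reindex (finCongr (natDegree_X_pow 2))

lemma bD_apply (i : Fin 2) : bD i = xD ^ (i : ℕ) := by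
  have h := (AdjoinRoot.powerBasis' monicX2).basis_eq_pow ((finCongr (natDegree_X_pow 2)).symm i)
  simp only [AdjoinRoot.powerBasis'] at h
  have h2 : bD i = (AdjoinRoot.powerBasisAux' monicX2) ((finCongr (natDegree_X_pow 2)).symm i) :=
    (AdjoinRoot.powerBasisAux' monicX2).reindex_apply (finCongr (natDegree_X_pow 2)) i
  rw [h2]; exact h

lemma bD0 : bD 0 = 1 := by rw [bD_apply]; norm_num
lemma bD1 : bD 1 = xD := by rw [bD_apply]; norm_num

lemma xD_sq : xD * xD = 0 := by
  show (Ideal.Quotient.mk (Ideal.span {(X : Polynomial ℝ) ^ 2}) (X * X) : Polynomial ℝ ⧸ Ideal.span {(X : Polynomial ℝ) ^ 2}) = 0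
  rw [Ideal.Quotient.eq_zero_iff_mem, ← sq]
  exact Ideal.subset_span rfl

lemma εD_xD : εD xD = 0 := by
  have h : εD xD = aeval (0 : ℝ) X := rfl
  rw [h]; simp

-- ### basis of WD ⊗ WD
def BT : Module.Basis (Fin 2 × Fin 2) ℝ (WD ⊗[ℝ] WD) := bD.tensorProduct bD

def t1 : WD ⊗[ℝ] WD := xD ⊗ₜ[ℝ] 1
def t2 : WD ⊗[ℝ] WD := xD ⊗ₜ[ℝ] xD

lemma BT00 : BT (0, 0) = 1 := by
  rw [BT, Module.Basis.tensorProduct_apply, bD0]; rfl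
lemma BT01 : BT (0, 1) = (1 : WD) ⊗ₜ[ℝ] xD := by
  rw [BT, Module.Basis.tensorProduct_apply, bD0, bD1]
lemma BT10 : BT (1, 0) = t1 := by
  rw [BT, Module.Basis.tensorProduct_apply, bD0, bD1]; rfl
lemma BT11 : BT (1, 1) = t2 := by
  rw [BT, Module.Basis.tensorProduct_apply, bD1]; rfl

-- ### WD2 generators
def mkW : MvPolynomial (Fin 2) ℝ →ₐ[ℝ] WD2 := Ideal.Quotient.mkₐ ℝ ID2

def uu : WD2 := Ideal.Quotient.mk _ (MvPolynomial.X 0)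
def vv : WD2 := Ideal.Quotient.mk _ (MvPolynomial.X 1)

lemma uu_mul_uu : uu * uu = 0 := by
  show (Ideal.Quotient.mk ID2 _ * Ideal.Quotient.mk ID2 _ : MvPolynomial (Fin 2) ℝ ⧸ ID2) = 0
  rw [← map_mul, Ideal.Quotient.eq_zero_iff_mem]
  exact Ideal.subset_span (by simp)
lemma uu_mul_vv : uu * vv = 0 := by
  show (Ideal.Quotient.mk ID2 _ * Ideal.Quotient.mk ID2 _ : MvPolynomial (Fin 2) ℝ ⧸ ID2) = 0
  rw [← map_mul, Ideal.Quotient.eq_zero_iff_mem]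
  exact Ideal.subset_span (by simp)
lemma vv_mul_vv : vv * vv = 0 := by
  show (Ideal.Quotient.mk ID2 _ * Ideal.Quotient.mk ID2 _ : MvPolynomial (Fin 2) ℝ ⧸ ID2) = 0
  rw [← map_mul, Ideal.Quotient.eq_zero_iff_mem]
  exact Ideal.subset_span (by simp)

lemma mkC (r : ℝ) : (Ideal.Quotient.mk ID2 (MvPolynomial.C r) : WD2) = algebraMap ℝ WD2 r := by
  have h := (Ideal.Quotient.mkₐ ℝ ID2).commutes r
  simp only [Ideal.Quotient.mkₐ_eq_mk, MvPolynomial.algebraMap_eq] at h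
  exact h

-- every element of WD2 is c + a•u + b•v
lemma WD2_repr (w : WD2) : ∃ c a b : ℝ, w = algebraMap ℝ WD2 c + a • uu + b • vv := by
  obtain ⟨p, rfl⟩ := Ideal.Quotient.mkₐ_surjective ℝ ID2 w
  show ∃ c a b : ℝ, mkW p = _
  induction p using MvPolynomial.induction_on with
  | C r => exact ⟨r, 0, 0, by show Ideal.Quotient.mk ID2 _ = _; simp [mkC]; rfl⟩
  | add p q hp hq =>
      obtain ⟨c, a, b, h1⟩ := hp
      obtain ⟨c', a', b', h2⟩ := hq
      refine ⟨c + c', a + a', b + b', ?_⟩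
      rw [map_add, h1, h2, map_add, add_smul, add_smul]
      abel
  | mul_X p i hp =>
      obtain ⟨c, a, b, h1⟩ := hp
      have hm : mkW (p * MvPolynomial.X i) =
          (algebraMap ℝ WD2 c + a • uu + b • vv) * mkW (MvPolynomial.X i) := by
        rw [map_mul, h1]
      obtain rfl | rfl : i = 0 ∨ i = 1 := by omega
      · refine ⟨0, c, 0, ?_⟩
        rw [hm]
        have h2 : mkW (MvPolynomial.X 0) = uu := rfl
        rw [h2, add_mul, add_mul, smul_mul_assoc, smul_mul_assoc, uu_mul_uu,
          show vv * uu = 0 from (mul_comm vv uu).trans uu_mul_vv,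
          Algebra.algebraMap_eq_smul_one, smul_mul_assoc, one_mul]
        simp
      · refine ⟨0, 0, c, ?_⟩
        rw [hm]
        have h2 : mkW (MvPolynomial.X 1) = vv := rfl
        rw [h2, add_mul, add_mul, smul_mul_assoc, smul_mul_assoc, uu_mul_vv, vv_mul_vv,
          Algebra.algebraMap_eq_smul_one, smul_mul_assoc, one_mul]
        simp

-- ### the map φ : WD2 →ₐ WD ⊗ WD
lemma t1_mul_t1 : t1 * t1 = 0 := by
  rw [t1]; exact (@Algebra.TensorProduct.tmul_mul_tmul ℝ WD WD _ _ Algebra.toModule _ _ _ Algebra.toModule _ _ _ _ _ _).trans (by rw [xD_sq]; have := TensorProduct.zero_tmul (R := ℝ) WD (1 * 1 : WD); exact this)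
lemma t1_mul_t2 : t1 * t2 = 0 := by
  rw [t1, t2]; exact (@Algebra.TensorProduct.tmul_mul_tmul ℝ WD WD _ _ Algebra.toModule _ _ _ Algebra.toModule _ _ _ _ _ _).trans (by rw [xD_sq]; have := TensorProduct.zero_tmul (R := ℝ) WD (1 * xD : WD); exact this)
lemma t2_mul_t2 : t2 * t2 = 0 := by
  rw [t2]; exact (@Algebra.TensorProduct.tmul_mul_tmul ℝ WD WD _ _ Algebra.toModule _ _ _ Algebra.toModule _ _ _ _ _ _).trans (by rw [xD_sq]; have := TensorProduct.zero_tmul (R := ℝ) WD (0 : WD); exact this)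

def φ : WD2 →ₐ[ℝ] (WD ⊗[ℝ] WD) :=
  Ideal.Quotient.liftₐ ID2 (MvPolynomial.aeval ![t1, t2]) (by
    intro a ha
    have h : ID2 ≤ RingHom.ker (MvPolynomial.aeval (R := ℝ) ![t1, t2]).toRingHom := by
      rw [ID2, Ideal.span_le]
      rintro p hp
      simp only [Set.mem_insert_iff, Set.mem_singleton_iff] at hp
      rcases hp with rfl | rfl | rfl <;>
        simp [SetLike.mem_coe, RingHom.mem_ker, t1_mul_t1, t1_mul_t2, t2_mul_t2]
    exact h ha)

lemma φ_uu : φ uu = t1 := by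
  have h : φ uu = MvPolynomial.aeval ![t1, t2] (MvPolynomial.X 0) := rfl
  rw [h]; simp
lemma φ_vv : φ vv = t2 := by
  have h : φ vv = MvPolynomial.aeval ![t1, t2] (MvPolynomial.X 1) := rfl
  rw [h]; simp

lemma φ_combo (c a b : ℝ) :
    φ (algebraMap ℝ WD2 c + a • uu + b • vv) =
      algebraMap ℝ (WD ⊗[ℝ] WD) c + a • t1 + b • t2 := by
  rw [map_add, map_add, map_smul, map_smul, φ_uu, φ_vv, AlgHom.commutes]

-- repr of a combo
lemma repr_combo (c a b : ℝ) :
    BT.repr (algebraMap ℝ (WD ⊗[ℝ] WD) c + a • t1 + b • t2) =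
      c • Finsupp.single ((0 : Fin 2), (0 : Fin 2)) (1 : ℝ) + a • Finsupp.single (1, 0) 1
        + b • Finsupp.single (1, 1) 1 := by
  have h1 : algebraMap ℝ (WD ⊗[ℝ] WD) c = c • BT (0, 0) := by
    rw [BT00, Algebra.algebraMap_eq_smul_one]
  rw [h1, ← BT10, ← BT11, map_add, map_add, map_smul, map_smul, map_smul,
    BT.repr_self, BT.repr_self, BT.repr_self]

lemma combo_inj (c a b : ℝ)
    (h : algebraMap ℝ (WD ⊗[ℝ] WD) c + a • t1 + b • t2 = 0) : c = 0 ∧ a = 0 ∧ b = 0 := by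
  have hr := repr_combo c a b
  rw [h] at hr
  rw [show BT.repr (0 : WD ⊗[ℝ] WD) = 0 from BT.repr.map_zero] at hr
  have h00 := DFunLike.congr_fun hr.symm ((0 : Fin 2), (0 : Fin 2))
  have h10 := DFunLike.congr_fun hr.symm ((1 : Fin 2), (0 : Fin 2))
  have h11 := DFunLike.congr_fun hr.symm ((1 : Fin 2), (1 : Fin 2))
  simp [Finsupp.single_apply, Prod.ext_iff] at h00 h10 h11
  exact ⟨h00, h10, h11⟩

lemma φ_inj : Function.Injective φ := by
  rw [injective_iff_map_eq_zero]
  intro w hw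
  obtain ⟨c, a, b, rfl⟩ := WD2_repr w
  rw [φ_combo] at hw
  obtain ⟨rfl, rfl, rfl⟩ := combo_inj _ _ _ hw
  simp

-- ### computing p1 and p0
lemma p1_tmul (x y : WD) : p1 εD (x ⊗ₜ[ℝ] y) = algebraMap ℝ WD (εD x) * y := by
  simp [p1, Algebra.TensorProduct.productMap_apply_tmul, Algebra.ofId_apply]
lemma p0_tmul (x y : WD) :
    p0 εD εD (x ⊗ₜ[ℝ] y) = algebraMap ℝ WD (εD x) * algebraMap ℝ WD (εD y) := by
  simp [p0, Algebra.TensorProduct.productMap_apply_tmul, Algebra.ofId_apply]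

lemma p1_t1 : p1 εD t1 = 0 := by rw [t1, p1_tmul, εD_xD]; simp
lemma p1_t2 : p1 εD t2 = 0 := by rw [t2, p1_tmul, εD_xD]; simp
lemma p0_t1 : p0 εD εD t1 = 0 := by rw [t1, p0_tmul, εD_xD]; simp
lemma p0_t2 : p0 εD εD t2 = 0 := by rw [t2, p0_tmul, εD_xD]; simp
lemma p1_1x : p1 εD ((1 : WD) ⊗ₜ[ℝ] xD) = xD := by rw [p1_tmul]; simp
lemma p0_1x : p0 εD εD ((1 : WD) ⊗ₜ[ℝ] xD) = 0 := by rw [p0_tmul, εD_xD]; simp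

lemma φ_mem_redT (w : WD2) : φ w ∈ redT εD εD := by
  obtain ⟨c, a, b, rfl⟩ := WD2_repr w
  rw [φ_combo]
  show p1 εD _ = p0 εD εD _
  rw [map_add, map_add, map_smul, map_smul, map_add, map_add, map_smul, map_smul,
    p1_t1, p1_t2, p0_t1, p0_t2, AlgHom.commutes, AlgHom.commutes]

-- ### surjectivity onto redT
lemma redT_le_range : redT εD εD ≤ φ.range := by
  intro z hz
  have hrepr := BT.sum_repr z
  rw [Fintype.sum_prod_type, Fin.sum_univ_two, Fin.sum_univ_two, Fin.sum_univ_two] at hrepr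
  rw [BT00, BT01, BT10, BT11] at hrepr
  set r00 := BT.repr z (0, 0) with hr00
  set r01 := BT.repr z (0, 1) with hr01
  set r10 := BT.repr z (1, 0) with hr10
  set r11 := BT.repr z (1, 1) with hr11
  have hz' : p1 εD z = p0 εD εD z := hz
  have hp1 : p1 εD z = r00 • 1 + r01 • xD := by
    conv_lhs => rw [← hrepr]
    rw [map_add, map_add, map_add, map_smul, map_smul, map_smul, map_smul,
      p1_t1, p1_t2, p1_1x, map_one]
    simp
  have hp0 : p0 εD εD z = r00 • 1 := by
    conv_lhs => rw [← hrepr]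
    rw [map_add, map_add, map_add, map_smul, map_smul, map_smul, map_smul,
      p0_t1, p0_t2, p0_1x, map_one]
    simp
  rw [hp1, hp0] at hz'
  have hx0 : r01 • xD = 0 := by
    have := hz'
    rwa [add_eq_left] at this
  have hr01z : r01 = 0 := by
    have h := congrArg (fun w => bD.repr w 1) hx0
    rw [← bD1, map_smul, bD.repr_self] at h
    simpa [Finsupp.single_apply] using h
  refine ⟨algebraMap ℝ WD2 r00 + r10 • uu + r11 • vv, ?_⟩
  show φ (algebraMap ℝ WD2 r00 + r10 • uu + r11 • vv) = z
  rw [φ_combo, ← hrepr, hr01z]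
  rw [Algebra.algebraMap_eq_smul_one]
  simp
  abel


/-- `W_{D(2)}` is isomorphic, as an ℝ-algebra, to the reduced tensor product
`W_D ⊗̃ W_D`, i.e. the equalizer subalgebra of `p₁` and `p₀` in `W_D ⊗ W_D`. -/
theorem WD2_iso_reduced_tensor :
    Nonempty (WD2 ≃ₐ[ℝ] (redT εD εD : Subalgebra ℝ (WD ⊗[ℝ] WD))) := by
  have hrange : φ.range = redT εD εD := by
    apply le_antisymm
    · rintro _ ⟨w, rfl⟩
      exact φ_mem_redT w
    · exact redT_le_range
  exact ⟨(AlgEquiv.ofInjective φ φ_inj).trans (Subalgebra.equivOfEq _ _ hrange)⟩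
end
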